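/- A Whittaker module V over R(f) is irreducible if and only if its central annihilator Z_V ⊂ Z(R) is a maximal ideal, if and only if the space of Whittaker vectors in V is one-dimensional. -/

import Mathlib

open Polynomial

inductive SmithGen : Type
  | E | F | H

open SmithGen in
inductive SmithRel (f : ℂ[X]) : FreeAlgebra ℂ SmithGen → FreeAlgebra ℂ SmithGen → Prop
  | ef : SmithRel f (FreeAlgebra.ι ℂ E * FreeAlgebra.ι ℂ F - FreeAlgebra.ι ℂ F * FreeAlgebra.ι ℂ E)
      (aeval (FreeAlgebra.ι ℂ H) f)
  | he : SmithRel f (FreeAlgebra.ι ℂ H * FreeAlgebra.ι ℂ E - FreeAlgebra.ι ℂ E * FreeAlgebra.ι ℂ H)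
      (FreeAlgebra.ι ℂ E)
  | hf : SmithRel f (FreeAlgebra.ι ℂ H * FreeAlgebra.ι ℂ F - FreeAlgebra.ι ℂ F * FreeAlgebra.ι ℂ H)
      (-FreeAlgebra.ι ℂ F)

/-- Smith's algebra `R(f)`, similar to `U(sl₂)`. -/
abbrev SmithAlgebra (f : ℂ[X]) : Type := RingQuot (SmithRel f)

noncomputable def SmithE (f : ℂ[X]) : SmithAlgebra f :=
  RingQuot.mkAlgHom ℂ (SmithRel f) (FreeAlgebra.ι ℂ SmithGen.E)

noncomputable def SmithF (f : ℂ[X]) : SmithAlgebra f :=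
  RingQuot.mkAlgHom ℂ (SmithRel f) (FreeAlgebra.ι ℂ SmithGen.F)

noncomputable def SmithH (f : ℂ[X]) : SmithAlgebra f :=
  RingQuot.mkAlgHom ℂ (SmithRel f) (FreeAlgebra.ι ℂ SmithGen.H)

/-- The Casimir element `Ω = 2FE + u(H+1)`. -/
noncomputable def SmithOmega (f u : ℂ[X]) : SmithAlgebra f :=
  2 * SmithF f * SmithE f + aeval (SmithH f) (u.comp (X + 1))

/-- The action of the center `Z(R)` on an `R(f)`-module `V`, as a ring homomorphism
`Z(R) → End_{R(f)}(V)`; its kernel is `Z_V = Ann_{Z(R)}(V)`. -/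
noncomputable def smithCentralAction (f : ℂ[X]) (V : Type) [AddCommGroup V]
    [Module (SmithAlgebra f) V] :
    Subalgebra.center ℂ (SmithAlgebra f) →+* Module.End (SmithAlgebra f) V where
  toFun z :=
    { toFun := fun v => (z : SmithAlgebra f) • v
      map_add' := fun v₁ v₂ => smul_add _ _ _
      map_smul' := fun r v => by
        simp only [RingHom.id_apply]
        rw [smul_smul, smul_smul, Subalgebra.mem_center_iff.mp z.2 r] }
  map_one' := by ext v; exact one_smul _ _
  map_mul' z₁ z₂ := by ext v; exact mul_smul _ _ _
  map_zero' := by ext v; exact zero_smul _ _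
  map_add' z₁ z₂ := by ext v; exact add_smul _ _ _

namespace SmithAux

open Polynomial

variable (f : ℂ[X])

theorem gen_induction {P : SmithAlgebra f → Prop}
    (halg : ∀ a : ℂ, P (algebraMap ℂ (SmithAlgebra f) a))
    (hE : P (SmithE f)) (hF : P (SmithF f)) (hH : P (SmithH f))
    (hadd : ∀ x y, P x → P y → P (x + y))
    (hmul : ∀ x y, P x → P y → P (x * y)) : ∀ x, P x := by
  intro x
  obtain ⟨x, rfl⟩ := RingQuot.mkAlgHom_surjective ℂ (SmithRel f) x
  induction x using FreeAlgebra.induction with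
  | grade0 a => simpa using halg a
  | grade1 g =>
    cases g
    · exact hE
    · exact hF
    · exact hH
  | mul x y hx hy => rw [map_mul]; exact hmul _ _ hx hy
  | add x y hx hy => rw [map_add]; exact hadd _ _ hx hy

theorem rel_EF : SmithE f * SmithF f = SmithF f * SmithE f + aeval (SmithH f) f := by
  have h := RingQuot.mkAlgHom_rel ℂ (SmithRel.ef (f := f))
  simp only [map_sub, map_mul] at h
  rw [← Polynomial.aeval_algHom_apply] at h
  rw [sub_eq_iff_eq_add] at h
  rw [SmithE, SmithF, SmithH, h]
  abel

theorem rel_HE : SmithH f * SmithE f = SmithE f * SmithH f + SmithE f := by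
  have h := RingQuot.mkAlgHom_rel ℂ (SmithRel.he (f := f))
  simp only [map_sub, map_mul] at h
  rw [sub_eq_iff_eq_add] at h
  rw [SmithE, SmithH, h]
  abel

theorem rel_HF : SmithH f * SmithF f = SmithF f * SmithH f - SmithF f := by
  have h := RingQuot.mkAlgHom_rel ℂ (SmithRel.hf (f := f))
  simp only [map_sub, map_mul, map_neg] at h
  rw [sub_eq_iff_eq_add] at h
  rw [SmithF, SmithH, h]
  abel

theorem E_Hpow (n : ℕ) :
    SmithE f * SmithH f ^ n = (SmithH f - 1) ^ n * SmithE f := by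
  induction n with
  | zero => simp
  | succ n ih =>
    rw [pow_succ, ← mul_assoc, ih, mul_assoc, pow_succ, mul_assoc]
    congr 1
    have h := rel_HE f
    rw [sub_mul, one_mul, h]
    abel

theorem Hpow_F (n : ℕ) :
    SmithH f ^ n * SmithF f = SmithF f * (SmithH f - 1) ^ n := by
  induction n with
  | zero => simp
  | succ n ih =>
    rw [pow_succ, mul_assoc, rel_HF f, mul_sub, ← mul_assoc, ih, pow_succ, ← mul_assoc,
      mul_sub, mul_one]

theorem E_aevalH (p : ℂ[X]) :
    SmithE f * aeval (SmithH f) p = aeval (SmithH f) (p.comp (X - 1)) * SmithE f := by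
  induction p using Polynomial.induction_on' with
  | add p q hp hq => simp only [map_add, add_comp, mul_add, add_mul, hp, hq]
  | monomial n a =>
    rw [aeval_monomial, aeval_comp, map_sub, aeval_X, map_one, aeval_monomial,
      ← mul_assoc, ← Algebra.commutes a, mul_assoc, E_Hpow, ← mul_assoc]

theorem aevalH_F (p : ℂ[X]) :
    aeval (SmithH f) p * SmithF f = SmithF f * aeval (SmithH f) (p.comp (X - 1)) := by
  induction p using Polynomial.induction_on' with
  | add p q hp hq => simp only [map_add, add_comp, mul_add, add_mul, hp, hq]
  | monomial n a =>
    rw [aeval_monomial, aeval_comp, map_sub, aeval_X, map_one, aeval_monomial,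
      mul_assoc, Hpow_F, ← mul_assoc, Algebra.commutes a, mul_assoc]

theorem F_aevalH (p : ℂ[X]) :
    SmithF f * aeval (SmithH f) p = aeval (SmithH f) (p.comp (X + 1)) * SmithF f := by
  have h := aevalH_F f (p.comp (X + 1))
  rw [comp_assoc] at h
  simp only [add_comp, X_comp, one_comp, sub_add_cancel, comp_X] at h
  rw [h]


theorem exists_antideriv_aux (n : ℕ) :
    ∀ g : ℂ[X], g.natDegree ≤ n → ∃ u : ℂ[X], u.comp (X + 1) - u = g := by
  induction n with
  | zero =>
    intro g hg
    refine ⟨C (g.coeff 0) * X, ?_⟩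
    conv_rhs => rw [Polynomial.eq_C_of_natDegree_le_zero hg]
    rw [mul_comp, C_comp, X_comp]
    ring
  | succ n ih =>
    intro g hg
    by_cases hd : g.natDegree ≤ n
    · exact ih g hd
    · have hdeg : g.natDegree = n + 1 := le_antisymm hg (not_le.mp hd)
      have hn2 : ((n : ℂ) + 2) ≠ 0 := by
        exact_mod_cast Nat.cast_add_one_ne_zero (R := ℂ) (n + 1)
      obtain ⟨a, u₀, p, ha, hu₀, hp⟩ :
          ∃ (a : ℂ) (u₀ p : ℂ[X]), a = g.leadingCoeff ∧
            u₀ = C a * C ((n + 2 : ℂ))⁻¹ * X ^ (n + 2) ∧ p = u₀.comp (X + 1) - u₀ :=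
        ⟨_, _, _, rfl, rfl, rfl⟩
      have hcoeff : ∀ m : ℕ, n < m → (g - p).coeff m = 0 := by
        intro m hm
        have hhm : p.coeff m = (C a * C ((n + 2 : ℂ))⁻¹ *
            ((X + 1 : ℂ[X]) ^ (n + 2) - X ^ (n + 2))).coeff m := by
          rw [hp, hu₀]
          congr 1
          rw [mul_comp, mul_comp, C_comp, C_comp, X_pow_comp]
          ring
        rw [coeff_sub, hhm]
        rw [mul_assoc, coeff_C_mul, coeff_C_mul, coeff_sub, coeff_X_add_one_pow, coeff_X_pow]
        rcases lt_trichotomy m (n + 2) with h1 | h1 | h1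
        · have hm1 : m = n + 1 := by omega
          subst hm1
          rw [if_neg (by omega)]
          have : ((n + 2).choose (n + 1) : ℂ) = (n : ℂ) + 2 := by
            rw [Nat.choose_succ_self_right]
            push_cast
            ring
          rw [this, sub_zero, inv_mul_cancel₀ hn2, mul_one, ha]
          conv_lhs => rw [← hdeg]
          exact sub_eq_zero.mpr rfl
        · subst h1
          rw [if_pos rfl, Nat.choose_self]
          have hgz : g.coeff (n + 2) = 0 := coeff_eq_zero_of_natDegree_lt (by omega)
          rw [hgz]
          simp
        · rw [if_neg (by omega), Nat.choose_eq_zero_of_lt h1]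
          have hgz : g.coeff m = 0 := coeff_eq_zero_of_natDegree_lt (by omega)
          rw [hgz]
          simp
      have hle : (g - p).natDegree ≤ n := natDegree_le_iff_coeff_eq_zero.mpr hcoeff
      obtain ⟨u₁, hu₁⟩ := ih (g - p) hle
      refine ⟨u₀ + u₁, ?_⟩
      rw [hp] at hu₁
      rw [add_comp]
      linear_combination hu₁

theorem exists_antideriv (g : ℂ[X]) : ∃ u : ℂ[X], u.comp (X + 1) - u = g :=
  exists_antideriv_aux g.natDegree g le_rfl

section Central

variable {f} {u : ℂ[X]} (hu : u.comp (X + 1) - u = 2 * f)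
include hu

theorem omega_central : SmithOmega f u ∈ Subalgebra.center ℂ (SmithAlgebra f) := by
  set E := SmithE f
  set F := SmithF f
  set H := SmithH f
  set g : ℂ[X] := u.comp (X + 1) with hgdef
  have hg : g.comp (X - 1) = u := by
    rw [hgdef, comp_assoc]
    simp
  have hgu : aeval H g = aeval H u + 2 * aeval H f := by
    have : g = u + 2 * f := by rw [hgdef, ← hu]; ring
    rw [this]
    simp [map_ofNat]
  rw [Subalgebra.mem_center_iff]
  have main : ∀ b, b * SmithOmega f u = SmithOmega f u * b := by
    refine gen_induction f (P := fun b => b * SmithOmega f u = SmithOmega f u * b)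
      (fun a => Algebra.commutes a _) ?_ ?_ ?_ ?_ ?_
    · -- E
      have hEg : E * aeval H g = aeval H u * E := by rw [E_aevalH, hg]
      have h1 : E * (2*F*E) = 2*(F*E)*E + 2*(aeval H f)*E := by
        rw [show E*(2*F*E) = 2*((E*F)*E) by noncomm_ring, rel_EF]
        noncomm_ring
      show SmithE f * (2 * SmithF f * SmithE f + aeval (SmithH f) (u.comp (X + 1))) =
        (2 * SmithF f * SmithE f + aeval (SmithH f) (u.comp (X + 1))) * SmithE f
      rw [mul_add, add_mul, h1, hEg, hgu]
      noncomm_ring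
    · -- F
      have h2 : aeval H g * F = F * aeval H u := by rw [aevalH_F, hg]
      have h3 : 2*F*E*F = F*(2*F*E) + 2*(F*aeval H f) := by
        rw [show 2*F*E*F = 2*(F*(E*F)) by noncomm_ring, rel_EF]
        noncomm_ring
      show SmithF f * (2 * SmithF f * SmithE f + aeval (SmithH f) (u.comp (X + 1))) =
        (2 * SmithF f * SmithE f + aeval (SmithH f) (u.comp (X + 1))) * SmithF f
      rw [mul_add, add_mul, h3, h2, hgu]
      noncomm_ring
    · -- H
      have h4 : H*(F*E) = (F*E)*H := by
        rw [← mul_assoc, rel_HF, sub_mul, mul_assoc, rel_HE]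
        noncomm_ring
      have a1 := map_mul (aeval H) X g
      have a2 := map_mul (aeval H) g X
      rw [aeval_X] at a1 a2
      have h5 : H * aeval H g = aeval H g * H := by
        rw [← a1, ← a2, mul_comm X g]
      have h6 : H*(2*F*E) = (2*F*E)*H := by
        rw [show H*(2*F*E) = 2*(H*(F*E)) by noncomm_ring, h4]
        noncomm_ring
      show SmithH f * (2 * SmithF f * SmithE f + aeval (SmithH f) (u.comp (X + 1))) =
        (2 * SmithF f * SmithE f + aeval (SmithH f) (u.comp (X + 1))) * SmithH f
      rw [mul_add, add_mul, h6, h5]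
    · intro x y hx hy
      rw [add_mul, mul_add, hx, hy]
    · intro x y hx hy
      rw [mul_assoc, hy, ← mul_assoc, hx, mul_assoc]
  intro b
  exact main b

end Central

noncomputable def adE : Module.End ℂ (SmithAlgebra f) :=
  LinearMap.mulLeft ℂ (SmithE f) - LinearMap.mulRight ℂ (SmithE f)

theorem adE_apply (x : SmithAlgebra f) : adE f x = SmithE f * x - x * SmithE f := rfl

def IsNil (x : SmithAlgebra f) : Prop := ∃ n, (adE f ^ n) x = 0

variable {f}

theorem isNil_stable {x : SmithAlgebra f} {n k : ℕ} (h : (adE f ^ n) x = 0) (hk : n ≤ k) :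
    (adE f ^ k) x = 0 := by
  obtain ⟨m, rfl⟩ := Nat.exists_eq_add_of_le hk
  rw [add_comm, pow_add, Module.End.mul_apply, h, map_zero]

theorem isNil_of_adE {x : SmithAlgebra f} (h : IsNil f (adE f x)) : IsNil f x := by
  obtain ⟨n, hn⟩ := h
  exact ⟨n + 1, by rwa [pow_succ, Module.End.mul_apply]⟩

theorem isNil_zero : IsNil f 0 := ⟨0, by simp⟩

theorem isNil_add {x y : SmithAlgebra f} (hx : IsNil f x) (hy : IsNil f y) : IsNil f (x + y) := by
  obtain ⟨n, hn⟩ := hx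
  obtain ⟨m, hm⟩ := hy
  exact ⟨max n m, by rw [map_add, isNil_stable hn (le_max_left n m),
    isNil_stable hm (le_max_right n m), add_zero]⟩

theorem isNil_neg {x : SmithAlgebra f} (hx : IsNil f x) : IsNil f (-x) := by
  obtain ⟨n, hn⟩ := hx
  exact ⟨n, by rw [map_neg, hn, neg_zero]⟩

theorem adE_mul (x y : SmithAlgebra f) : adE f (x * y) = adE f x * y + x * adE f y := by
  simp only [adE_apply, sub_mul, mul_sub, mul_assoc]
  abel

theorem isNil_mul_aux : ∀ k : ℕ, ∀ x y : SmithAlgebra f, ∀ n m : ℕ, n + m ≤ k →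
    (adE f ^ n) x = 0 → (adE f ^ m) y = 0 → IsNil f (x * y) := by
  intro k
  induction k with
  | zero =>
    intro x y n m hnm hx hy
    have hn0 : n = 0 := by omega
    subst hn0
    simp only [pow_zero, Module.End.one_apply] at hx
    rw [hx, zero_mul]
    exact isNil_zero
  | succ k ih =>
    intro x y n m hnm hx hy
    match n, m with
    | 0, m =>
      simp only [pow_zero, Module.End.one_apply] at hx
      rw [hx, zero_mul]; exact isNil_zero
    | n, 0 =>
      simp only [pow_zero, Module.End.one_apply] at hy
      rw [hy, mul_zero]; exact isNil_zero
    | n + 1, m + 1 =>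
      apply isNil_of_adE
      rw [adE_mul]
      have hx' : (adE f ^ n) (adE f x) = 0 := by
        rwa [← Module.End.mul_apply, ← pow_succ]
      have hy' : (adE f ^ m) (adE f y) = 0 := by
        rwa [← Module.End.mul_apply, ← pow_succ]
      exact isNil_add
        (ih (adE f x) y n (m + 1) (by omega) hx' hy)
        (ih x (adE f y) (n + 1) m (by omega) hx hy')

theorem isNil_mul {x y : SmithAlgebra f} (hx : IsNil f x) (hy : IsNil f y) : IsNil f (x * y) := by
  obtain ⟨n, hn⟩ := hx
  obtain ⟨m, hm⟩ := hy
  exact isNil_mul_aux (n + m) x y n m le_rfl hn hm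

theorem isNil_algebraMap (a : ℂ) : IsNil f (algebraMap ℂ (SmithAlgebra f) a) :=
  ⟨1, by rw [pow_one, adE_apply, ← Algebra.commutes a, sub_self]⟩

theorem isNil_E : IsNil f (SmithE f) := ⟨1, by rw [pow_one, adE_apply, sub_self]⟩

theorem isNil_H : IsNil f (SmithH f) := by
  apply isNil_of_adE
  have : adE f (SmithH f) = -SmithE f := by
    rw [adE_apply, rel_HE]
    abel
  rw [this]
  exact isNil_neg isNil_E

theorem isNil_aevalH (p : ℂ[X]) : IsNil f (aeval (SmithH f) p) := by
  induction p using Polynomial.induction_on' with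
  | add p q hp hq => rw [map_add]; exact isNil_add hp hq
  | monomial n a =>
    rw [aeval_monomial]
    apply isNil_mul (isNil_algebraMap a)
    induction n with
    | zero => rw [pow_zero]; exact ⟨1, by rw [pow_one, adE_apply, mul_one, one_mul, sub_self]⟩
    | succ n ihn => rw [pow_succ]; exact isNil_mul ihn isNil_H

theorem isNil_F : IsNil f (SmithF f) := by
  apply isNil_of_adE
  have : adE f (SmithF f) = aeval (SmithH f) f := by
    rw [adE_apply, rel_EF]
    abel
  rw [this]
  exact isNil_aevalH f

theorem isNil_all (x : SmithAlgebra f) : IsNil f x :=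
  gen_induction f (P := fun x => IsNil f x) isNil_algebraMap isNil_E isNil_F isNil_H
    (fun _ _ => isNil_add) (fun _ _ => isNil_mul) x

section Modules

set_option linter.unusedSectionVars false

variable {c : ℂ} {V : Type} [AddCommGroup V] [Module (SmithAlgebra f) V]
  [Module ℂ V] [IsScalarTower ℂ (SmithAlgebra f) V] {w : V}

theorem x_smul_w (hw : SmithE f • w = algebraMap ℂ (SmithAlgebra f) c • w)
    (r : SmithAlgebra f) :
    ((SmithE f - algebraMap ℂ (SmithAlgebra f) c) * r) • w = (adE f r) • w := by
  have hrE : (r * SmithE f) • w = (algebraMap ℂ (SmithAlgebra f) c * r) • w := by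
    rw [mul_smul, hw, ← mul_smul, ← Algebra.commutes c r]
  rw [adE_apply, sub_mul, sub_smul, sub_smul, hrE]

theorem xpow_smul_w (hw : SmithE f • w = algebraMap ℂ (SmithAlgebra f) c • w)
    (n : ℕ) (r : SmithAlgebra f) :
    ((SmithE f - algebraMap ℂ (SmithAlgebra f) c) ^ n * r) • w = ((adE f ^ n) r) • w := by
  induction n with
  | zero => simp
  | succ n ih =>
    rw [pow_succ', mul_assoc, mul_smul, ih, ← mul_smul, x_smul_w hw, pow_succ',
      Module.End.mul_apply]

theorem exists_xpow_smul_eq_zero (hw : SmithE f • w = algebraMap ℂ (SmithAlgebra f) c • w)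
    (hcyc : ∀ v : V, ∃ r : SmithAlgebra f, v = r • w) (v : V) :
    ∃ n, ((SmithE f - algebraMap ℂ (SmithAlgebra f) c) ^ n) • v = 0 := by
  obtain ⟨r, rfl⟩ := hcyc v
  obtain ⟨n, hn⟩ := isNil_all (f := f) r
  refine ⟨n, ?_⟩
  rw [← mul_smul, xpow_smul_w hw, hn, zero_smul]

theorem whittaker_iff (v : V) :
    SmithE f • v = algebraMap ℂ (SmithAlgebra f) c • v ↔
      (SmithE f - algebraMap ℂ (SmithAlgebra f) c) • v = 0 := by
  rw [sub_smul, sub_eq_zero]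

theorem exists_whittaker_of_ne_bot
    (hw : SmithE f • w = algebraMap ℂ (SmithAlgebra f) c • w)
    (hcyc : ∀ v : V, ∃ r : SmithAlgebra f, v = r • w)
    (M : Submodule (SmithAlgebra f) V) (hM : M ≠ ⊥) :
    ∃ v ∈ M, v ≠ 0 ∧ SmithE f • v = algebraMap ℂ (SmithAlgebra f) c • v := by
  obtain ⟨v, hvM, hv0⟩ := Submodule.exists_mem_ne_zero_of_ne_bot hM
  obtain ⟨n, hn⟩ := exists_xpow_smul_eq_zero hw hcyc v
  clear hcyc
  induction n generalizing v with
  | zero => simp only [pow_zero, one_smul] at hn; exact absurd hn hv0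
  | succ n ih =>
    by_cases h0 : (SmithE f - algebraMap ℂ (SmithAlgebra f) c) • v = 0
    · exact ⟨v, hvM, hv0, (whittaker_iff v).mpr h0⟩
    · refine ih ((SmithE f - algebraMap ℂ (SmithAlgebra f) c) • v)
        (M.smul_mem _ hvM) h0 ?_
      rw [← mul_smul, ← pow_succ]
      exact hn

variable (f) in
noncomputable def pi {V : Type} [AddCommGroup V] [Module (SmithAlgebra f) V] (w : V)
    (g : ℂ[X]) : V := aeval (SmithH f) g • w

noncomputable def phi (u : ℂ[X]) (c lam : ℂ) : ℂ[X] :=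
  (2 * c)⁻¹ • (C lam - u.comp (X + 1))

theorem pi_add (w : V) (g h : ℂ[X]) : pi f w (g + h) = pi f w g + pi f w h := by
  rw [pi, pi, pi, map_add, add_smul]

theorem pi_sub (w : V) (g h : ℂ[X]) : pi f w (g - h) = pi f w g - pi f w h := by
  rw [pi, pi, pi, map_sub, sub_smul]

theorem pi_smul (w : V) (a : ℂ) (g : ℂ[X]) : pi f w (a • g) = a • pi f w g := by
  rw [pi, pi, map_smul, smul_assoc]

theorem pi_C (w : V) (a : ℂ) : pi f w (C a) = a • w := by
  rw [pi, aeval_C, algebraMap_smul]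

theorem pi_one (w : V) : pi f w 1 = w := by
  rw [pi, map_one, one_smul]

theorem smul_pi (w : V) (r : SmithAlgebra f) (g : ℂ[X]) :
    r • pi f w g = (r * aeval (SmithH f) g) • w := by
  rw [pi, mul_smul]

theorem pi_E (hw : SmithE f • w = algebraMap ℂ (SmithAlgebra f) c • w) (g : ℂ[X]) :
    SmithE f • pi f w g = c • pi f w (g.comp (X - 1)) := by
  rw [smul_pi, E_aevalH, mul_smul, hw, ← mul_smul, ← Algebra.commutes c, mul_smul,
    algebraMap_smul, pi]

theorem pi_H (w : V) (g : ℂ[X]) : SmithH f • pi f w g = pi f w (X * g) := by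
  rw [smul_pi, pi, map_mul, aeval_X]

section Omega

variable {u : ℂ[X]} {lam : ℂ} (hc : c ≠ 0)
  (hw : SmithE f • w = algebraMap ℂ (SmithAlgebra f) c • w)
  (hΩ : SmithOmega f u • w = lam • w)

include hc hw hΩ

theorem two_smul_eq (x : V) : (2 : SmithAlgebra f) • x = (2 : ℂ) • x := by
  rw [show ((2 : SmithAlgebra f)) = algebraMap ℂ (SmithAlgebra f) (2 : ℂ) by
    rw [map_ofNat], algebraMap_smul]

theorem F_smul_w : SmithF f • w = pi f w (phi u c lam) := by
  have h2c : (2 * c) ≠ 0 := mul_ne_zero two_ne_zero hc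
  have h1 : (2 * c) • (SmithF f • w) = lam • w - pi f w (u.comp (X + 1)) := by
    have h2 : SmithOmega f u • w
        = (2 * c) • (SmithF f • w) + pi f w (u.comp (X + 1)) := by
      rw [SmithOmega, add_smul, pi]
      congr 1
      rw [mul_smul, hw, ← mul_smul, ← Algebra.commutes c, mul_smul, algebraMap_smul,
        mul_smul, two_smul_eq hc hw hΩ, smul_smul, mul_comm c 2]
    rw [h2] at hΩ
    rw [← hΩ]
    abel
  rw [phi, pi_smul, pi_sub, pi_C, ← h1, inv_smul_smul₀ h2c]

theorem pi_F (g : ℂ[X]) :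
    SmithF f • pi f w g = pi f w (phi u c lam * g.comp (X + 1)) := by
  rw [smul_pi, F_aevalH, mul_smul, F_smul_w hc hw hΩ, pi, pi, ← mul_smul, ← map_mul,
    mul_comm (phi u c lam)]

theorem pi_surjective (hcyc : ∀ v : V, ∃ r : SmithAlgebra f, v = r • w) (v : V) :
    ∃ g : ℂ[X], pi f w g = v := by
  have key : ∀ r : SmithAlgebra f, ∀ g : ℂ[X], ∃ g', r • pi f w g = pi f w g' := by
    refine gen_induction f
      (P := fun r => ∀ g : ℂ[X], ∃ g', r • pi f w g = pi f w g') ?_ ?_ ?_ ?_ ?_ ?_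
    · intro a g
      exact ⟨a • g, by rw [algebraMap_smul, pi_smul]⟩
    · intro g
      exact ⟨c • g.comp (X - 1), by rw [pi_E hw, pi_smul]⟩
    · intro g
      exact ⟨phi u c lam * g.comp (X + 1), pi_F hc hw hΩ g⟩
    · intro g
      exact ⟨X * g, pi_H w g⟩
    · intro x y hx hy g
      obtain ⟨gx, hgx⟩ := hx g
      obtain ⟨gy, hgy⟩ := hy g
      exact ⟨gx + gy, by rw [add_smul, hgx, hgy, pi_add]⟩
    · intro x y hx hy g
      obtain ⟨gy, hgy⟩ := hy g
      obtain ⟨gxy, hgxy⟩ := hx gy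
      exact ⟨gxy, by rw [mul_smul, hgy, hgxy]⟩
  obtain ⟨r, rfl⟩ := hcyc v
  obtain ⟨g', hg'⟩ := key r 1
  exact ⟨g', by rw [← hg', pi_one]⟩

omit hc hw hΩ in
theorem eq_C_of_comp_eq {g : ℂ[X]} (h : g.comp (X - 1) = g) : g = C (g.eval 0) := by
  have heval : ∀ x : ℂ, g.eval (x - 1) = g.eval x := by
    intro x
    conv_rhs => rw [← h]
    rw [eval_comp]
    simp
  have hnat : ∀ n : ℕ, g.eval (-(n : ℂ)) = g.eval 0 := by
    intro n
    induction n with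
    | zero => simp
    | succ n ih =>
      have := heval (-(n : ℂ))
      push_cast
      rw [neg_add, ← sub_eq_add_neg, this, ih]
  have hroot : ∀ n : ℕ, (g - C (g.eval 0)).IsRoot (-(n : ℂ)) := by
    intro n
    simp [IsRoot, hnat n]
  have hzero : g - C (g.eval 0) = 0 := by
    apply eq_zero_of_infinite_isRoot
    apply Set.Infinite.mono (s := Set.range (fun n : ℕ => -(n : ℂ)))
    · rintro x ⟨n, rfl⟩
      exact hroot n
    · exact Set.infinite_range_of_injective (fun a b hab => by
        exact_mod_cast neg_injective hab)
  linear_combination hzero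

omit hc hw hΩ in
theorem smul_w_eq_zero {a : ℂ} (hwne : w ≠ 0) (h : a • w = 0) : a = 0 := by
  by_contra ha
  exact hwne (by rw [← inv_smul_smul₀ ha w, h, smul_zero])

omit hΩ in
theorem ker_pi_aux (hwne : w ≠ 0) :
    ∀ n : ℕ, ∀ g : ℂ[X], g.natDegree ≤ n → pi f w g = 0 → g = 0 := by
  intro n
  induction n with
  | zero =>
    intro g hg hpi
    rw [Polynomial.eq_C_of_natDegree_le_zero hg] at hpi ⊢
    rw [pi_C] at hpi
    rw [smul_w_eq_zero hwne hpi, map_zero]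
  | succ n ih =>
    intro g hg hpi
    by_cases hg0 : g = 0
    · exact hg0
    by_cases hgd : g.natDegree = 0
    · rw [Polynomial.eq_C_of_natDegree_le_zero hgd.le] at hpi ⊢
      rw [pi_C] at hpi
      rw [smul_w_eq_zero hwne hpi, map_zero]
    have hcomp0 : pi f w (g.comp (X - 1)) = 0 := by
      have h2 := pi_E hw g
      rw [hpi, smul_zero] at h2
      rw [← inv_smul_smul₀ hc (pi f w (g.comp (X - 1))), ← h2, smul_zero]
    have hsub0 : pi f w (g.comp (X - 1) - g) = 0 := by
      rw [pi_sub, hcomp0, hpi, sub_zero]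
    by_cases hgs : g.comp (X - 1) - g = 0
    · have : g = C (g.eval 0) := eq_C_of_comp_eq (by linear_combination hgs)
      rw [this] at hpi ⊢
      rw [pi_C] at hpi
      rw [smul_w_eq_zero hwne hpi, map_zero]
    · have hX1 : (X - 1 : ℂ[X]).natDegree = 1 := by
        have : (X - 1 : ℂ[X]) = X - C 1 := by rw [map_one]
        rw [this, natDegree_X_sub_C]
      have hdcomp : (g.comp (X - 1)).natDegree = g.natDegree := by
        rw [natDegree_comp, hX1, mul_one]
      have hccomp : (g.comp (X - 1)).leadingCoeff = g.leadingCoeff := by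
        rw [leadingCoeff_comp (by rw [hX1]; norm_num)]
        have hlc1 : (X - 1 : ℂ[X]).leadingCoeff = 1 := by
          rw [show (X - 1 : ℂ[X]) = X - C 1 by rw [map_one]]
          exact (monic_X_sub_C (1 : ℂ)).leadingCoeff
        rw [hlc1, one_pow, mul_one]
      have hcompne : g.comp (X - 1) ≠ 0 := fun hcc => hg0
        (leadingCoeff_eq_zero.mp (by rw [← hccomp, hcc, leadingCoeff_zero]))
      have hdeglt : (g.comp (X - 1) - g).natDegree < g.natDegree := by
        have hdlt : (g.comp (X - 1) - g).degree < (g.comp (X - 1)).degree :=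
          Polynomial.degree_sub_lt
            (by rw [degree_eq_natDegree hcompne, degree_eq_natDegree hg0, hdcomp])
            hcompne hccomp
        have hlt := Polynomial.natDegree_lt_natDegree hgs hdlt
        rwa [hdcomp] at hlt
      exact absurd (ih _ (by omega) hsub0) hgs

theorem pi_inj (hwne : w ≠ 0) {g h : ℂ[X]} (hgh : pi f w g = pi f w h) : g = h := by
  have h0 : pi f w (g - h) = 0 := by rw [pi_sub, hgh, sub_self]
  have := ker_pi_aux hc hw hwne (g - h).natDegree (g - h) le_rfl h0
  exact sub_eq_zero.mp this

theorem whittaker_mem (hwne : w ≠ 0) (hcyc : ∀ v : V, ∃ r : SmithAlgebra f, v = r • w)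
    (v : V) (hv : SmithE f • v = algebraMap ℂ (SmithAlgebra f) c • v) :
    ∃ a : ℂ, v = a • w := by
  obtain ⟨g, rfl⟩ := pi_surjective hc hw hΩ hcyc v
  have h1 : c • pi f w (g.comp (X - 1)) = c • pi f w g := by
    rw [← pi_E hw, hv, algebraMap_smul]
  have h3 : pi f w (g.comp (X - 1)) = pi f w g := by
    calc pi f w (g.comp (X - 1)) = c⁻¹ • (c • pi f w (g.comp (X - 1))) :=
          (inv_smul_smul₀ hc _).symm
      _ = c⁻¹ • (c • pi f w g) := by rw [h1]
      _ = pi f w g := inv_smul_smul₀ hc _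
  have h4 : g.comp (X - 1) = g := pi_inj hc hw hΩ hwne h3
  have h5 : g = C (g.eval 0) := eq_C_of_comp_eq h4
  refine ⟨g.eval 0, ?_⟩
  conv_lhs => rw [h5]
  rw [pi_C]

theorem isSimple_of_omega (hwne : w ≠ 0) (hcyc : ∀ v : V, ∃ r : SmithAlgebra f, v = r • w) :
    IsSimpleModule (SmithAlgebra f) V := by
  have hbt : (⊥ : Submodule (SmithAlgebra f) V) ≠ ⊤ := by
    intro h
    apply hwne
    have : w ∈ (⊥ : Submodule (SmithAlgebra f) V) := h.symm ▸ Submodule.mem_top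
    simpa using this
  refine { exists_pair_ne := ⟨⊥, ⊤, hbt⟩, eq_bot_or_eq_top := ?_ }
  intro M
  by_cases hM : M = ⊥
  · exact Or.inl hM
  right
  obtain ⟨v, hvM, hv0, hWh⟩ := exists_whittaker_of_ne_bot hw hcyc M hM
  obtain ⟨a, rfl⟩ := whittaker_mem hc hw hΩ hwne hcyc v hWh
  have ha : a ≠ 0 := fun h => hv0 (by rw [h, zero_smul])
  have hwM : w ∈ M := by
    have h6 := M.smul_mem (algebraMap ℂ (SmithAlgebra f) a⁻¹) hvM
    rwa [algebraMap_smul, smul_smul, inv_mul_cancel₀ ha, one_smul] at h6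
  rw [Submodule.eq_top_iff']
  intro v'
  obtain ⟨r, rfl⟩ := hcyc v'
  exact M.smul_mem r hwM

end Omega

end Modules

section Dixmier

variable {D : Type} [DivisionRing D] [Algebra ℂ D]

theorem alg_scalar_aux (θ : D) :
    ∀ n : ℕ, ∀ p : ℂ[X], p.natDegree ≤ n → p ≠ 0 → aeval θ p = 0 →
      ∃ μ : ℂ, θ = algebraMap ℂ D μ := by
  intro n
  induction n with
  | zero =>
    intro p hp hp0 hpθ
    rw [Polynomial.eq_C_of_natDegree_le_zero hp] at hpθ
    rw [aeval_C] at hpθ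
    have : p.coeff 0 ≠ 0 := by
      intro h
      apply hp0
      rw [Polynomial.eq_C_of_natDegree_le_zero hp, h, map_zero]
    exact absurd ((_root_.map_eq_zero (algebraMap ℂ D)).mp hpθ) this
  | succ n ih =>
    intro p hp hp0 hpθ
    by_cases hd : p.natDegree ≤ n
    · exact ih p hd hp0 hpθ
    have hdeg : 0 < p.degree := by
      rw [degree_eq_natDegree hp0]
      exact_mod_cast Nat.pos_of_ne_zero (by omega)
    obtain ⟨r, hr⟩ := Complex.exists_root hdeg
    obtain ⟨q, hq⟩ := (Polynomial.dvd_iff_isRoot.mpr hr)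
    have hq0 : q ≠ 0 := by
      intro h
      apply hp0
      rw [hq, h, mul_zero]
    rw [hq, map_mul] at hpθ
    have hXC : aeval θ (X - C r) = θ - algebraMap ℂ D r := by
      rw [map_sub, aeval_X, aeval_C]
    rw [hXC] at hpθ
    rcases mul_eq_zero.mp hpθ with h1 | h1
    · exact ⟨r, sub_eq_zero.mp h1⟩
    · apply ih q ?_ hq0 h1
      have hnd : p.natDegree = 1 + q.natDegree := by
        rw [hq, natDegree_mul (X_sub_C_ne_zero r) hq0, natDegree_X_sub_C]
      omega

theorem dixmier (hrank : Module.rank ℂ D < Cardinal.continuum) (θ : D) :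
    ∃ μ : ℂ, θ = algebraMap ℂ D μ := by
  by_cases halg : ∃ p : ℂ[X], p ≠ 0 ∧ aeval θ p = 0
  · obtain ⟨p, hp0, hpθ⟩ := halg
    exact alg_scalar_aux θ p.natDegree p le_rfl hp0 hpθ
  push_neg at halg
  have hinj : ∀ p : ℂ[X], aeval θ p = 0 → p = 0 := by
    intro p hp
    by_contra h0
    exact (halg p h0) hp
  have hne : ∀ a : ℂ, θ - algebraMap ℂ D a ≠ 0 := by
    intro a h
    have : aeval θ (X - C a) = 0 := by rw [map_sub, aeval_X, aeval_C, h]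
    exact X_sub_C_ne_zero a (hinj _ this)
  have hli : LinearIndependent ℂ (fun a : ℂ => (θ - algebraMap ℂ D a)⁻¹) := by
    rw [linearIndependent_iff']
    intro s g hsum i hi
    have key : ∀ a ∈ s, (θ - algebraMap ℂ D a)⁻¹ * aeval θ (∏ b ∈ s, (X - C b)) =
        aeval θ (∏ b ∈ s.erase a, (X - C b)) := by
      intro a ha
      rw [show (∏ b ∈ s, (X - C b) : ℂ[X]) = (X - C a) * ∏ b ∈ s.erase a, (X - C b) from
        (Finset.mul_prod_erase s _ ha).symm]
      rw [map_mul, ← mul_assoc, show aeval θ (X - C a) = θ - algebraMap ℂ D a by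
        rw [map_sub, aeval_X, aeval_C], inv_mul_cancel₀ (hne a), one_mul]
    have hsum2 : aeval θ (∑ a ∈ s, g a • ∏ b ∈ s.erase a, (X - C b)) = 0 := by
      rw [map_sum]
      calc ∑ a ∈ s, aeval θ (g a • ∏ b ∈ s.erase a, (X - C b))
          = ∑ a ∈ s, g a • ((θ - algebraMap ℂ D a)⁻¹ * aeval θ (∏ b ∈ s, (X - C b))) := by
            refine Finset.sum_congr rfl fun a ha => ?_
            rw [map_smul, key a ha]
        _ = (∑ a ∈ s, g a • (θ - algebraMap ℂ D a)⁻¹) * aeval θ (∏ b ∈ s, (X - C b)) := by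
            rw [Finset.sum_mul]
            exact Finset.sum_congr rfl fun a _ => (smul_mul_assoc _ _ _).symm
        _ = 0 := by rw [hsum, zero_mul]
    have hpoly := hinj _ hsum2
    have heval := congrArg (Polynomial.eval i) hpoly
    rw [Polynomial.eval_finset_sum] at heval
    simp only [Polynomial.eval_smul, Polynomial.eval_prod, Polynomial.eval_sub,
      Polynomial.eval_X, Polynomial.eval_C, Polynomial.eval_zero, smul_eq_mul] at heval
    rw [Finset.sum_eq_single i] at heval
    · have hprod : (∏ b ∈ s.erase i, (i - b)) ≠ 0 := by
        apply Finset.prod_ne_zero_iff.mpr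
        intro b hb
        exact sub_ne_zero.mpr (Ne.symm (Finset.mem_erase.mp hb).1)
      exact (mul_eq_zero.mp heval).resolve_right hprod
    · intro a ha hai
      apply mul_eq_zero_of_right
      apply Finset.prod_eq_zero (Finset.mem_erase.mpr ⟨Ne.symm hai, hi⟩)
      rw [sub_self]
    · intro h
      exact absurd hi h
  have hcard := hli.cardinal_le_rank
  rw [Cardinal.mk_complex] at hcard
  exact absurd hrank (not_lt.mpr hcard)

end Dixmier

instance : Countable SmithGen :=
  ⟨⟨fun g => match g with | .E => 0 | .F => 1 | .H => 2, by
    intro a b h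
    cases a <;> cases b <;> simp_all⟩⟩

instance : Nonempty SmithGen := ⟨.E⟩

theorem rank_R_le (f : ℂ[X]) :
    Module.rank ℂ (SmithAlgebra f) ≤ Cardinal.aleph0 := by
  have h1 : Module.rank ℂ (SmithAlgebra f) ≤ Module.rank ℂ (FreeAlgebra ℂ SmithGen) :=
    LinearMap.rank_le_of_surjective (RingQuot.mkAlgHom ℂ (SmithRel f)).toLinearMap
      (RingQuot.mkAlgHom_surjective ℂ (SmithRel f))
  have h2 : Module.rank ℂ (FreeAlgebra ℂ SmithGen) = (Cardinal.mk (List SmithGen)) := by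
    rw [FreeAlgebra.rank_eq, Cardinal.lift_id]
  rw [h2, Cardinal.mk_list_eq_aleph0] at h1
  exact h1

section Modules2

set_option linter.unusedSectionVars false

variable {f : ℂ[X]} {c : ℂ} {V : Type} [AddCommGroup V] [Module (SmithAlgebra f) V]
  [Module ℂ V] [IsScalarTower ℂ (SmithAlgebra f) V] {w : V}

theorem smulCommClassCV : SMulCommClass ℂ (SmithAlgebra f) V := by
  constructor
  intro a r v
  rw [← algebraMap_smul (SmithAlgebra f) a v, ← algebraMap_smul (SmithAlgebra f) a (r • v),
    ← mul_smul, ← mul_smul, Algebra.commutes]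

theorem rank_V_le (hcyc : ∀ v : V, ∃ r : SmithAlgebra f, v = r • w) :
    Module.rank ℂ V ≤ Cardinal.aleph0 := by
  let σ : SmithAlgebra f →ₗ[ℂ] V :=
    { toFun := fun r => r • w
      map_add' := fun x y => add_smul x y w
      map_smul' := fun a x => by simp only [RingHom.id_apply]; exact smul_assoc a x w }
  have hσ : Function.Surjective σ := fun v => by
    obtain ⟨r, rfl⟩ := hcyc v
    exact ⟨r, rfl⟩
  exact (LinearMap.rank_le_of_surjective σ hσ).trans (rank_R_le f)

theorem omega_eigen_of_simple {u : ℂ[X]} (hu : u.comp (X + 1) - u = 2 * f)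
    (hsimple : IsSimpleModule (SmithAlgebra f) V)
    (hcyc : ∀ v : V, ∃ r : SmithAlgebra f, v = r • w) :
    ∃ lam : ℂ, SmithOmega f u • w = lam • w := by
  haveI := smulCommClassCV (f := f) (V := V)
  haveI : DecidableEq (Module.End (SmithAlgebra f) V) := Classical.decEq _
  have hcomm := Subalgebra.mem_center_iff.mp (omega_central hu)
  let θ : Module.End (SmithAlgebra f) V :=
    { toFun := fun v => SmithOmega f u • v
      map_add' := fun v₁ v₂ => smul_add _ _ _
      map_smul' := fun r v => by
        simp only [RingHom.id_apply]
        rw [← mul_smul, ← mul_smul, hcomm r] }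
  let ev : Module.End (SmithAlgebra f) V →ₗ[ℂ] V :=
    { toFun := fun φ => φ w
      map_add' := fun φ ψ => rfl
      map_smul' := fun a φ => rfl }
  have hev : Function.Injective ev := by
    intro φ ψ h
    ext v
    obtain ⟨r, rfl⟩ := hcyc v
    have h' : φ w = ψ w := h
    rw [map_smul, map_smul, h']
  have hrank : Module.rank ℂ (Module.End (SmithAlgebra f) V) < Cardinal.continuum :=
    lt_of_le_of_lt ((LinearMap.rank_le_of_injective ev hev).trans (rank_V_le hcyc))
      Cardinal.aleph0_lt_continuum
  obtain ⟨mu, hmu⟩ := dixmier hrank θ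
  refine ⟨mu, ?_⟩
  have := congrArg (fun (ψ : Module.End (SmithAlgebra f) V) => ψ w) hmu
  simpa [θ, Module.algebraMap_end_apply] using this

theorem isSimple_of_wh_dim_one
    (hw : SmithE f • w = algebraMap ℂ (SmithAlgebra f) c • w)
    (hcyc : ∀ v : V, ∃ r : SmithAlgebra f, v = r • w)
    (v₀ : V) (hv₀ne : v₀ ≠ 0)
    (hv₀span : ∀ v : V, SmithE f • v = algebraMap ℂ (SmithAlgebra f) c • v →
      ∃ a : ℂ, v = a • v₀) :
    IsSimpleModule (SmithAlgebra f) V := by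
  have hwne : w ≠ 0 := by
    intro h0
    apply hv₀ne
    obtain ⟨r, hr⟩ := hcyc v₀
    rw [hr, h0, smul_zero]
  obtain ⟨a₀, ha₀⟩ := hv₀span w hw
  have ha₀ne : a₀ ≠ 0 := fun h => hwne (by rw [ha₀, h, zero_smul])
  have hv₀w : v₀ = a₀⁻¹ • w := by
    rw [ha₀, smul_smul, inv_mul_cancel₀ ha₀ne, one_smul]
  have hbt : (⊥ : Submodule (SmithAlgebra f) V) ≠ ⊤ := by
    intro h
    apply hwne
    have : w ∈ (⊥ : Submodule (SmithAlgebra f) V) := h.symm ▸ Submodule.mem_top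
    simpa using this
  refine { exists_pair_ne := ⟨⊥, ⊤, hbt⟩, eq_bot_or_eq_top := ?_ }
  intro M
  by_cases hM : M = ⊥
  · exact Or.inl hM
  right
  obtain ⟨v, hvM, hv0, hWh⟩ := exists_whittaker_of_ne_bot hw hcyc M hM
  obtain ⟨a, hva⟩ := hv₀span v hWh
  have ha : a ≠ 0 := fun h => hv0 (by rw [hva, h, zero_smul])
  have hwM : w ∈ M := by
    have h7 : w = (a₀ * a⁻¹) • v := by
      rw [hva, smul_smul, mul_assoc, inv_mul_cancel₀ ha, mul_one, ← ha₀]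
    rw [h7, ← algebraMap_smul (SmithAlgebra f) (a₀ * a⁻¹) v]
    exact M.smul_mem _ hvM
  rw [Submodule.eq_top_iff']
  intro v'
  obtain ⟨r, rfl⟩ := hcyc v'
  exact M.smul_mem r hwM

theorem scal_unique (hwne : w ≠ 0) {a b : ℂ} (h : a • w = b • w) : a = b := by
  have h1 : (a - b) • w = 0 := by rw [sub_smul, h, sub_self]
  have h2 : a - b = 0 := by
    by_contra hab
    exact hwne (by rw [← inv_smul_smul₀ hab w, h1, smul_zero])
  exact sub_eq_zero.mp h2

end Modules2

section Glue

set_option linter.unusedSectionVars false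

variable {f : ℂ[X]} {c : ℂ} {V : Type} [AddCommGroup V] [Module (SmithAlgebra f) V]
  [Module ℂ V] [IsScalarTower ℂ (SmithAlgebra f) V] {w : V} {u : ℂ[X]} {lam : ℂ}

theorem ker_isMax (hc : c ≠ 0)
    (hw : SmithE f • w = algebraMap ℂ (SmithAlgebra f) c • w)
    (hΩ : SmithOmega f u • w = lam • w) (hwne : w ≠ 0)
    (hcyc : ∀ v : V, ∃ r : SmithAlgebra f, v = r • w) :
    (RingHom.ker (smithCentralAction f V)).IsMaximal := by
  haveI := smulCommClassCV (f := f) (V := V)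
  have hzw : ∀ z : Subalgebra.center ℂ (SmithAlgebra f),
      ∃ a : ℂ, (z : SmithAlgebra f) • w = a • w := by
    intro z
    apply whittaker_mem hc hw hΩ hwne hcyc
    rw [← mul_smul, Subalgebra.mem_center_iff.mp z.2 (SmithE f), mul_smul, hw,
      ← mul_smul, ← Algebra.commutes c, mul_smul]
  choose χ hχ using hzw
  have hχu : ∀ (z : Subalgebra.center ℂ (SmithAlgebra f)) (a : ℂ),
      (z : SmithAlgebra f) • w = a • w → χ z = a := fun z a h =>
    scal_unique hwne ((hχ z).symm.trans h)
  let χR : Subalgebra.center ℂ (SmithAlgebra f) →+* ℂ :=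
    { toFun := χ
      map_one' := hχu 1 1 (by rw [OneMemClass.coe_one, one_smul, one_smul])
      map_mul' := fun z₁ z₂ => hχu (z₁ * z₂) (χ z₁ * χ z₂) (by
        rw [MulMemClass.coe_mul, mul_smul, hχ z₂, smul_comm ((z₁ : SmithAlgebra f)) (χ z₂) w,
          hχ z₁, smul_smul, mul_comm (χ z₂)])
      map_zero' := hχu 0 0 (by rw [ZeroMemClass.coe_zero, zero_smul, zero_smul])
      map_add' := fun z₁ z₂ => hχu (z₁ + z₂) (χ z₁ + χ z₂) (by
        rw [AddMemClass.coe_add, add_smul, hχ z₁, hχ z₂, add_smul]) }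
  have hker : RingHom.ker (smithCentralAction f V) = RingHom.ker χR := by
    ext z
    simp only [RingHom.mem_ker]
    constructor
    · intro h
      have h0 : (z : SmithAlgebra f) • w = 0 := by
        have := congrArg (fun (ψ : Module.End (SmithAlgebra f) V) => ψ w) h
        simpa [smithCentralAction] using this
      have h1 : χ z • w = 0 := by rw [← hχ z, h0]
      exact smul_w_eq_zero hwne h1
    · intro h
      have h0 : (z : SmithAlgebra f) • w = 0 := by
        rw [hχ z, show χ z = (0 : ℂ) from h, zero_smul]
      apply LinearMap.ext
      intro v
      obtain ⟨r, rfl⟩ := hcyc v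
      show (z : SmithAlgebra f) • (r • w) = (0 : Module.End (SmithAlgebra f) V) (r • w)
      rw [← mul_smul, ← Subalgebra.mem_center_iff.mp z.2 r, mul_smul, h0, smul_zero]
      rfl
  rw [hker]
  exact RingHom.ker_isMaximal_of_surjective χR (fun a =>
    ⟨⟨algebraMap ℂ (SmithAlgebra f) a, Subalgebra.algebraMap_mem _ a⟩,
      hχu _ a (algebraMap_smul (SmithAlgebra f) a w)⟩)

theorem omega_central_subring {u : ℂ[X]} (hu : u.comp (X + 1) - u = 2 * f) :
    SmithOmega f u ∈ Subring.center (SmithAlgebra f) :=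
  Subring.mem_center_iff.mpr (Subalgebra.mem_center_iff.mp (omega_central hu))

set_option maxHeartbeats 2000000 in
set_option synthInstance.maxHeartbeats 1000000 in
theorem omega_eigen_of_ker_max (hu : u.comp (X + 1) - u = 2 * f)
    (hcyc : ∀ v : V, ∃ r : SmithAlgebra f, v = r • w)
    (hmax : (RingHom.ker (smithCentralAction f V)).IsMaximal) :
    w ≠ 0 ∧ ∃ lam : ℂ, SmithOmega f u • w = lam • w := by
  have hwne : w ≠ 0 := by
    intro h0
    have hall : ∀ v : V, v = 0 := fun v => by
      obtain ⟨r, rfl⟩ := hcyc v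
      rw [h0, smul_zero]
    have h1 : (1 : Subalgebra.center ℂ (SmithAlgebra f)) ∈
        RingHom.ker (smithCentralAction f V) := by
      rw [RingHom.mem_ker]
      apply LinearMap.ext
      intro v
      exact (hall _).trans (hall _).symm
    exact hmax.ne_top ((Ideal.eq_top_iff_one _).mpr h1)
  let φ : Subring.center (SmithAlgebra f) →+* Subalgebra.center ℂ (SmithAlgebra f) :=
    { toFun := fun z => ⟨z.1, Subalgebra.mem_center_iff.mpr (Subring.mem_center_iff.mp z.2)⟩
      map_one' := rfl
      map_mul' := fun _ _ => rfl
      map_zero' := rfl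
      map_add' := fun _ _ => rfl }
  have hφ : Function.Surjective φ := fun z =>
    ⟨⟨z.1, Subring.mem_center_iff.mpr (Subalgebra.mem_center_iff.mp z.2)⟩, rfl⟩
  letI : Algebra ℂ (Subring.center (SmithAlgebra f)) := RingHom.toAlgebra
    { toFun := fun a => ⟨algebraMap ℂ (SmithAlgebra f) a,
        Subring.mem_center_iff.mpr (fun g => (Algebra.commutes a g).symm)⟩
      map_one' := Subtype.ext (map_one _)
      map_mul' := fun a b => Subtype.ext (map_mul _ a b)
      map_zero' := Subtype.ext (map_zero _)
      map_add' := fun a b => Subtype.ext (map_add _ a b) }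
  haveI hK₀max : (Ideal.comap φ (RingHom.ker (smithCentralAction f V))).IsMaximal :=
    haveI := hmax
    Ideal.comap_isMaximal_of_surjective φ hφ
  letI : Field (Subring.center (SmithAlgebra f) ⧸
      Ideal.comap φ (RingHom.ker (smithCentralAction f V))) := Ideal.Quotient.field _
  have hrank : Module.rank ℂ (Subring.center (SmithAlgebra f) ⧸
      Ideal.comap φ (RingHom.ker (smithCentralAction f V))) < Cardinal.continuum := by
    let vl : Subring.center (SmithAlgebra f) →ₗ[ℂ] SmithAlgebra f :=
      { toFun := Subtype.val
        map_add' := fun _ _ => rfl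
        map_smul' := fun a z => by
          simp only [RingHom.id_apply]
          show ((a • z : Subring.center (SmithAlgebra f)) : SmithAlgebra f) =
            a • (z : SmithAlgebra f)
          rw [Algebra.smul_def, Algebra.smul_def]
          rfl }
    have h1 : Module.rank ℂ (Subring.center (SmithAlgebra f)) ≤
        Module.rank ℂ (SmithAlgebra f) :=
      LinearMap.rank_le_of_injective vl Subtype.val_injective
    have h2 : Module.rank ℂ (Subring.center (SmithAlgebra f) ⧸
        Ideal.comap φ (RingHom.ker (smithCentralAction f V))) ≤
        Module.rank ℂ (Subring.center (SmithAlgebra f)) :=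
      LinearMap.rank_le_of_surjective
        (Ideal.Quotient.mkₐ ℂ (Ideal.comap φ (RingHom.ker (smithCentralAction f V)))).toLinearMap
        (Ideal.Quotient.mkₐ_surjective ℂ _)
    exact lt_of_le_of_lt (h2.trans (h1.trans (rank_R_le f))) Cardinal.aleph0_lt_continuum
  obtain ⟨lam, hlam⟩ := dixmier hrank
    (Ideal.Quotient.mk (Ideal.comap φ (RingHom.ker (smithCentralAction f V)))
      ⟨SmithOmega f u, omega_central_subring hu⟩)
  refine ⟨hwne, lam, ?_⟩
  have hmem0 : (⟨SmithOmega f u, omega_central_subring hu⟩ -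
      algebraMap ℂ (Subring.center (SmithAlgebra f)) lam) ∈
      Ideal.comap φ (RingHom.ker (smithCentralAction f V)) := by
    rw [← Ideal.Quotient.eq_zero_iff_mem, map_sub, hlam, Ideal.Quotient.mk_algebraMap, sub_self]
  have hmemK := Ideal.mem_comap.mp hmem0
  have h0 : (SmithOmega f u - algebraMap ℂ (SmithAlgebra f) lam) • w = 0 := by
    have h1 := congrArg (fun (ψ : Module.End (SmithAlgebra f) V) => ψ w)
      (RingHom.mem_ker.mp hmemK)
    simp [smithCentralAction, φ] at h1
    exact h1
  rw [sub_smul, sub_eq_zero] at h0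
  rw [h0, algebraMap_smul]

theorem wne_of_simple (hsimp : IsSimpleModule (SmithAlgebra f) V)
    (hcyc : ∀ v : V, ∃ r : SmithAlgebra f, v = r • w) : w ≠ 0 := by
  intro h0
  have hnt : Nontrivial V := IsSimpleModule.nontrivial (SmithAlgebra f) V
  obtain ⟨x, y, hxy⟩ := hnt.exists_pair_ne
  apply hxy
  obtain ⟨r, rfl⟩ := hcyc x
  obtain ⟨r', rfl⟩ := hcyc y
  rw [h0, smul_zero, smul_zero]

end Glue

end SmithAux
/-- A Whittaker module `V = R·w` is irreducible iff its central annihilator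
`Z_V ⊆ Z(R)` is a maximal ideal, iff the space of Whittaker vectors in `V` is
one-dimensional. -/
theorem smith_whittaker_irreducibility (f : ℂ[X]) (c : ℂ) (hc : c ≠ 0)
    (V : Type) [AddCommGroup V] [Module (SmithAlgebra f) V]
    [Module ℂ V] [IsScalarTower ℂ (SmithAlgebra f) V] (w : V)
    (hw : SmithE f • w = algebraMap ℂ (SmithAlgebra f) c • w)
    (hcyc : ∀ v : V, ∃ r : SmithAlgebra f, v = r • w) :
    (IsSimpleModule (SmithAlgebra f) V ↔ (RingHom.ker (smithCentralAction f V)).IsMaximal) ∧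
    (IsSimpleModule (SmithAlgebra f) V ↔
      ∃ v₀ : V, v₀ ≠ 0 ∧ SmithE f • v₀ = algebraMap ℂ (SmithAlgebra f) c • v₀ ∧
        ∀ v : V, SmithE f • v = algebraMap ℂ (SmithAlgebra f) c • v → ∃ a : ℂ, v = a • v₀) := by
  obtain ⟨u, hu⟩ := SmithAux.exists_antideriv (2 * f)
  constructor
  · constructor
    · intro hsimp
      have hwne : w ≠ 0 := SmithAux.wne_of_simple hsimp hcyc
      obtain ⟨lam, hΩ⟩ := SmithAux.omega_eigen_of_simple hu hsimp hcyc
      exact SmithAux.ker_isMax hc hw hΩ hwne hcyc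
    · intro hmax
      obtain ⟨hwne, lam, hΩ⟩ := SmithAux.omega_eigen_of_ker_max hu hcyc hmax
      exact SmithAux.isSimple_of_omega hc hw hΩ hwne hcyc
  · constructor
    · intro hsimp
      have hwne : w ≠ 0 := SmithAux.wne_of_simple hsimp hcyc
      obtain ⟨lam, hΩ⟩ := SmithAux.omega_eigen_of_simple hu hsimp hcyc
      exact ⟨w, hwne, hw, fun v hv => SmithAux.whittaker_mem hc hw hΩ hwne hcyc v hv⟩
    · rintro ⟨v₀, hv₀ne, hv₀wh, hv₀span⟩
      exact SmithAux.isSimple_of_wh_dim_one hw hcyc v₀ hv₀ne hv₀span
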